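/- In the setting of Proposition 2 (near-exact positive formula with residual ε, ε√M < 1), for every polynomial p of degree ≤ n: ‖p‖_{ℓ²(X)} ≤ √M · β_M(ε) · max_{t ∈ T_{2n}} |p(t)|, where β_M(ε) = (1 − ε√M)^{−1/2} (1 + ε/√M)^{1/2}. -/
import Mathlib


open MvPolynomial

/-- Proposition 2, second inequality: in the same near-exact setting with
`ε√M < 1`, `‖p‖_{ℓ²(X)} ≤ √M β_M(ε) max_{t∈T_{2n}}|p(t)|`, where
`β_M(ε) = (1−ε√M)^{-1/2}(1+ε/√M)^{1/2}` and the CATCH points `T_{2n}` are the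
points of `X` carrying a nonzero weight `u_i`; the maximum is expressed
through an arbitrary nonnegative upper bound `A` of `|p|` on `T_{2n}`. -/
theorem prop2_second_inequality
    (d n M N : ℕ) (x : Fin M → (Fin d → ℝ))
    (ψ : Fin N → (Fin M → ℝ))
    (hψpoly : ∀ k, ∃ q : MvPolynomial (Fin d) ℝ,
      q.totalDegree ≤ 2 * n ∧ ∀ i, ψ k i = eval (x i) q)
    (horth : ∀ j k, ∑ i, ψ j i * ψ k i = if j = k then 1 else 0)
    (hspan : ∀ q : MvPolynomial (Fin d) ℝ, q.totalDegree ≤ 2 * n →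
      ∃ c : Fin N → ℝ, ∀ i, eval (x i) q = ∑ k, c k * ψ k i)
    (u : Fin M → ℝ) (hu : ∀ i, 0 ≤ u i) (ε : ℝ)
    (hres : Real.sqrt (∑ k, (∑ i, u i * ψ k i - ∑ i, ψ k i) ^ 2) = ε)
    (hε : ε * Real.sqrt M < 1) :
    ∀ p : MvPolynomial (Fin d) ℝ, p.totalDegree ≤ n →
      ∀ A : ℝ, 0 ≤ A → (∀ i, u i ≠ 0 → |eval (x i) p| ≤ A) →
        Real.sqrt (∑ i, (eval (x i) p) ^ 2)
          ≤ Real.sqrt M *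
              (Real.sqrt (1 - ε * Real.sqrt M)⁻¹ *
                Real.sqrt (1 + ε / Real.sqrt M)) * A := by
  have hε0 : 0 ≤ ε := hres ▸ Real.sqrt_nonneg _
  -- Key estimate: for any polynomial q of degree ≤ 2n, the residual of the
  -- quadrature applied to q is bounded by ε ‖q‖₂.
  have key : ∀ q : MvPolynomial (Fin d) ℝ, q.totalDegree ≤ 2 * n →
      |(∑ i, u i * eval (x i) q) - ∑ i, eval (x i) q|
        ≤ ε * Real.sqrt (∑ i, (eval (x i) q) ^ 2) := by
    intro q hq
    obtain ⟨c, hc⟩ := hspan q hq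
    set r : Fin N → ℝ := fun k => (∑ i, u i * ψ k i) - ∑ i, ψ k i with hr
    have hswap : ∀ v : Fin M → ℝ,
        ∑ i, v i * eval (x i) q = ∑ k, c k * ∑ i, v i * ψ k i := by
      intro v
      simp only [hc, Finset.mul_sum]
      rw [Finset.sum_comm]
      exact Finset.sum_congr rfl fun k _ => Finset.sum_congr rfl fun i _ => by ring
    have hswap1 : ∑ i, eval (x i) q = ∑ k, c k * ∑ i, ψ k i := by
      simpa using hswap (fun _ => 1)
    have h1 : (∑ i, u i * eval (x i) q) - ∑ i, eval (x i) q = ∑ k, c k * r k := by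
      rw [hswap u, hswap1, ← Finset.sum_sub_distrib]
      exact Finset.sum_congr rfl fun k _ => by simp [hr, mul_sub]
    have h2 : ∑ i, (eval (x i) q) ^ 2 = ∑ k, (c k) ^ 2 := by
      have expand : ∀ i, (eval (x i) q) ^ 2
          = ∑ k, ∑ j, (c k * c j) * (ψ k i * ψ j i) := by
        intro i
        rw [hc, sq, Finset.sum_mul_sum]
        exact Finset.sum_congr rfl fun k _ => Finset.sum_congr rfl fun j _ => by ring
      simp only [expand]
      rw [Finset.sum_comm]
      have hk : ∀ k : Fin N, ∑ i : Fin M, ∑ j : Fin N, (c k * c j) * (ψ k i * ψ j i)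
          = c k * c k := by
        intro k
        rw [Finset.sum_comm]
        have hj : ∀ j : Fin N, ∑ i : Fin M, (c k * c j) * (ψ k i * ψ j i)
            = c k * c j * (if k = j then 1 else 0) := by
          intro j
          rw [← horth k j, Finset.mul_sum]
        simp only [hj, mul_ite, mul_one, mul_zero]
        simp
      simp [hk, sq]
    have hcs := Finset.sum_mul_sq_le_sq_mul_sq Finset.univ c r
    have habs : |∑ k, c k * r k| ≤ Real.sqrt (∑ k, (c k) ^ 2) * Real.sqrt (∑ k, (r k) ^ 2) := by
      calc |∑ k, c k * r k| = Real.sqrt ((∑ k, c k * r k) ^ 2) :=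
            (Real.sqrt_sq_eq_abs _).symm
        _ ≤ Real.sqrt ((∑ k, (c k) ^ 2) * ∑ k, (r k) ^ 2) := Real.sqrt_le_sqrt hcs
        _ = Real.sqrt (∑ k, (c k) ^ 2) * Real.sqrt (∑ k, (r k) ^ 2) :=
            Real.sqrt_mul (Finset.sum_nonneg fun _ _ => sq_nonneg _) _
    rw [h1, h2, mul_comm]
    calc |∑ k, c k * r k| ≤ Real.sqrt (∑ k, (c k) ^ 2) * Real.sqrt (∑ k, (r k) ^ 2) := habs
      _ = Real.sqrt (∑ k, (c k) ^ 2) * ε := by rw [← hres]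
  intro p hp A hA hAp
  rcases Nat.eq_zero_or_pos M with hM | hM
  · subst hM
    simp
  have hM1 : (1 : ℝ) ≤ Real.sqrt M := by
    rw [Real.one_le_sqrt]
    exact_mod_cast hM
  have hMpos : (0 : ℝ) < Real.sqrt M := lt_of_lt_of_le one_pos hM1
  -- sum of weights
  have hq1 := key 1 (by simp)
  have hsumu : ∑ i, u i ≤ M + ε * Real.sqrt M := by
    simp only [map_one, Finset.sum_const, Finset.card_univ, Fintype.card_fin, mul_one,
      one_pow, nsmul_eq_mul] at hq1
    linarith [(abs_le.mp hq1).2]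
  -- main polynomial estimate
  set S : ℝ := ∑ i, (eval (x i) p) ^ 2 with hSdef
  have hS0 : 0 ≤ S := Finset.sum_nonneg fun _ _ => sq_nonneg _
  have hdeg : (p * p).totalDegree ≤ 2 * n :=
    le_trans (totalDegree_mul p p) (by omega)
  have hq2 := key (p * p) hdeg
  simp only [map_mul] at hq2
  have heval : ∀ i, eval (x i) p * eval (x i) p = (eval (x i) p) ^ 2 := fun i => (sq _).symm
  simp only [heval] at hq2
  have h4 : ∑ i, ((eval (x i) p) ^ 2) ^ 2 ≤ S ^ 2 :=
    Finset.sum_sq_le_sq_sum_of_nonneg fun i _ => sq_nonneg _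
  have hsq4 : Real.sqrt (∑ i, ((eval (x i) p) ^ 2) ^ 2) ≤ S := by
    calc Real.sqrt (∑ i, ((eval (x i) p) ^ 2) ^ 2) ≤ Real.sqrt (S ^ 2) :=
          Real.sqrt_le_sqrt h4
      _ = S := Real.sqrt_sq hS0
  have hq2' : S - ∑ i, u i * (eval (x i) p) ^ 2 ≤ ε * S := by
    have h1 := (abs_le.mp hq2).2
    have h2 := (abs_le.mp hq2).1
    nlinarith [hq2, hsq4, Real.sqrt_nonneg (∑ i, ((eval (x i) p) ^ 2) ^ 2)]
  have hup : ∑ i, u i * (eval (x i) p) ^ 2 ≤ A ^ 2 * ∑ i, u i := by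
    rw [Finset.mul_sum]
    refine Finset.sum_le_sum fun i _ => ?_
    rcases eq_or_ne (u i) 0 with h | h
    · simp [h]
    · have hpA : (eval (x i) p) ^ 2 ≤ A ^ 2 := by
        rw [← sq_abs]
        exact pow_le_pow_left₀ (abs_nonneg _) (hAp i h) 2
      calc u i * (eval (x i) p) ^ 2 ≤ u i * A ^ 2 :=
            mul_le_mul_of_nonneg_left hpA (hu i)
        _ = A ^ 2 * u i := by ring
  have hεle : ε ≤ ε * Real.sqrt M := by
    nlinarith
  have hb : 0 < 1 - ε * Real.sqrt M := by linarith
  have hmain : (1 - ε * Real.sqrt M) * S ≤ A ^ 2 * ((M : ℝ) + ε * Real.sqrt M) := by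
    have h1 : (1 - ε * Real.sqrt M) * S ≤ (1 - ε) * S := by
      apply mul_le_mul_of_nonneg_right _ hS0
      linarith
    have h2 : (1 - ε) * S ≤ ∑ i, u i * (eval (x i) p) ^ 2 := by linarith
    have h3 : ∑ i, u i * (eval (x i) p) ^ 2 ≤ A ^ 2 * ((M : ℝ) + ε * Real.sqrt M) := by
      calc ∑ i, u i * (eval (x i) p) ^ 2 ≤ A ^ 2 * ∑ i, u i := hup
        _ ≤ A ^ 2 * ((M : ℝ) + ε * Real.sqrt M) :=
            mul_le_mul_of_nonneg_left hsumu (sq_nonneg A)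
    linarith
  have hMid : (M : ℝ) + ε * Real.sqrt M = (M : ℝ) * (1 + ε / Real.sqrt M) := by
    have hMs : Real.sqrt M * Real.sqrt M = (M : ℝ) :=
      Real.mul_self_sqrt (Nat.cast_nonneg M)
    field_simp
    nlinarith
  have hSle : S ≤ (M : ℝ) * ((1 - ε * Real.sqrt M)⁻¹ * (1 + ε / Real.sqrt M)) * A ^ 2 := by
    have h := mul_le_mul_of_nonneg_left hmain (le_of_lt (inv_pos.mpr hb))
    rw [← mul_assoc, inv_mul_cancel₀ (ne_of_gt hb), one_mul, hMid] at h
    have heq : (1 - ε * Real.sqrt M)⁻¹ * (A ^ 2 * ((M : ℝ) * (1 + ε / Real.sqrt M)))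
        = (M : ℝ) * ((1 - ε * Real.sqrt M)⁻¹ * (1 + ε / Real.sqrt M)) * A ^ 2 := by ring
    linarith [h, heq.le]
  have h1p : 0 ≤ 1 + ε / Real.sqrt M := by positivity
  calc Real.sqrt S
      ≤ Real.sqrt ((M : ℝ) * ((1 - ε * Real.sqrt M)⁻¹ * (1 + ε / Real.sqrt M)) * A ^ 2) :=
        Real.sqrt_le_sqrt hSle
    _ = Real.sqrt M *
          (Real.sqrt (1 - ε * Real.sqrt M)⁻¹ * Real.sqrt (1 + ε / Real.sqrt M)) * A := by
        rw [Real.sqrt_mul (by positivity), Real.sqrt_mul (Nat.cast_nonneg M),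
          Real.sqrt_mul (le_of_lt (inv_pos.mpr hb)), Real.sqrt_sq hA]
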